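/- The IB upper bound: L_{X_n}(X_{n-1} → Y_{n-1}) = I(X_n;X_{n-1}) − I(X_n;Y_{n-1}) is bounded above by the redundancy-rate difference R̄(X) − R̄(Y') = D̄(X || X'^μ), where Y' is the optimal aggregation and X'^μ the μ-lifting; concretely, H(X_n|Y_{n-1}) − H(X_n|X_{n-1}) ≤ H(X) − H(Y') + H̄(Y') − H̄(X). -/

import Mathlib

open Finset

/-- The IB upper bound: `L_{X_n}(X_{n-1} → Y_{n-1}) = H(X_n|Y_{n-1}) − H(X_n|X_{n-1})`
is bounded above by the redundancy-rate difference
`R̄(X) − R̄(Y') = H(X) − H(Y') + H̄(Y') − H̄(X) = D̄(X‖X'^μ)`, where `Y'` is the optimal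
aggregation with transition matrix `Q` and invariant distribution `ν`. -/
theorem IB_loss_le_redundancy_rate_difference {𝒳 𝒴 : Type*} [Fintype 𝒳] [Fintype 𝒴]
    [DecidableEq 𝒴] [Nonempty 𝒳]
    (P : 𝒳 → 𝒳 → ℝ) (μ : 𝒳 → ℝ) (g : 𝒳 → 𝒴)
    (hPnn : ∀ i j, 0 ≤ P i j) (hProw : ∀ i, ∑ j, P i j = 1)
    (hμpos : ∀ i, 0 < μ i) (hμsum : ∑ i, μ i = 1)
    (hμinv : ∀ j, ∑ i, μ i * P i j = μ j)
    (R : 𝒳 → 𝒴 → ℝ)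
    (hR : ∀ i l, R i l = ∑ j ∈ univ.filter (fun j => g j = l), P i j)
    (ν : 𝒴 → ℝ)
    (hν : ∀ k, ν k = ∑ i ∈ univ.filter (fun i => g i = k), μ i)
    (Q : 𝒴 → 𝒴 → ℝ)
    (hQ : ∀ k l, Q k l =
      (∑ i ∈ univ.filter (fun i => g i = k),
        ∑ j ∈ univ.filter (fun j => g j = l), μ i * P i j) / ν k)
    -- S_{kj} = Pr(X_n = j | Y_{n-1} = k)
    (S : 𝒴 → 𝒳 → ℝ)
    (hS : ∀ k j, S k j = (∑ i ∈ univ.filter (fun i => g i = k), μ i * P i j) / ν k) :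
    (-∑ k, ∑ j, ν k * S k j * Real.log (S k j))
      - (-∑ i, ∑ j, μ i * P i j * Real.log (P i j))
    ≤ (-∑ i, μ i * Real.log (μ i)) - (-∑ k, ν k * Real.log (ν k))
      + (-∑ k, ∑ l, ν k * Q k l * Real.log (Q k l))
      - (-∑ i, ∑ j, μ i * P i j * Real.log (P i j)) := by
  classical
  set p : 𝒴 → 𝒳 → ℝ := fun k j => ∑ i ∈ univ.filter (fun i => g i = k), μ i * P i j with hp
  have hνnn : ∀ k, 0 ≤ ν k := fun k => by
    rw [hν]; exact Finset.sum_nonneg fun i _ => (hμpos i).le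
  have hν0 : ∀ k, ν k = 0 → (univ.filter (fun i => g i = k)) = ∅ := by
    intro k hk
    rw [hν] at hk
    by_contra h
    obtain ⟨i, hi⟩ := Finset.nonempty_iff_ne_empty.mpr h
    have h1 := Finset.single_le_sum (f := μ) (fun i _ => (hμpos i).le) hi
    linarith [hμpos i]
  have hpnn : ∀ k j, 0 ≤ p k j := fun k j =>
    Finset.sum_nonneg fun i _ => mul_nonneg (hμpos i).le (hPnn i j)
  have hpS : ∀ k j, ν k * S k j = p k j := by
    intro k j
    rcases eq_or_ne (ν k) 0 with h | h
    · simp [h, hp, hν0 k h]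
    · rw [hS]; field_simp [hp]; rfl
  have hpQ : ∀ k l, ν k * Q k l = ∑ j ∈ univ.filter (fun j => g j = l), p k j := by
    intro k l
    rcases eq_or_ne (ν k) 0 with h | h
    · simp [h, hp, hν0 k h]
    · rw [hQ, mul_div_cancel₀ _ h, Finset.sum_comm]
  have hνg : ∀ j : 𝒳, 0 < ν (g j) := by
    intro j
    rw [hν]
    have hj : j ∈ univ.filter (fun i => g i = g j) := by simp
    exact lt_of_lt_of_le (hμpos j)
      (Finset.single_le_sum (f := μ) (fun i _ => (hμpos i).le) hj)
  have hpμ : ∀ j, ∑ k, p k j = μ j := by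
    intro j
    rw [hp]
    rw [Finset.sum_fiberwise univ g (fun i => μ i * P i j)]
    exact hμinv j
  have hQnn : ∀ k l, 0 ≤ Q k l := by
    intro k l
    rw [hQ]
    exact div_nonneg (Finset.sum_nonneg fun i _ => Finset.sum_nonneg fun j _ =>
      mul_nonneg (hμpos i).le (hPnn i j)) (hνnn k)
  set q : 𝒴 → 𝒳 → ℝ := fun k j => ν k * Q k (g j) * μ j / ν (g j) with hq
  have hqnn : ∀ k j, 0 ≤ q k j :=
    fun k j => div_nonneg (mul_nonneg (mul_nonneg (hνnn k) (hQnn k (g j))) (hμpos j).le)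
      (hνg j).le
  have pointwise : ∀ k j,
      p k j * (Real.log (Q k (g j)) + Real.log (μ j) - Real.log (ν (g j))
        - Real.log (S k j)) ≤ q k j - p k j := by
    intro k j
    rcases eq_or_lt_of_le (hpnn k j) with h | h
    · rw [← h]; simpa using hqnn k j
    · have hνk : 0 < ν k := by
        rcases eq_or_ne (ν k) 0 with h0 | h0
        · exfalso
          have : p k j = 0 := by simp [hp, hν0 k h0]
          linarith
        · exact lt_of_le_of_ne (hνnn k) (Ne.symm h0)
      have hQpos : 0 < Q k (g j) := by
        have h1 : p k j ≤ ν k * Q k (g j) := by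
          rw [hpQ]
          exact Finset.single_le_sum (f := fun j' => p k j') (fun j' _ => hpnn k j')
            (by simp)
        have h2 : 0 < ν k * Q k (g j) := lt_of_lt_of_le h h1
        by_contra hc
        push_neg at hc
        nlinarith
      have hqpos : 0 < q k j := by
        rw [hq]
        exact div_pos (mul_pos (mul_pos hνk hQpos) (hμpos j)) (hνg j)
      have hSval : S k j = p k j / ν k := by
        rw [eq_div_iff hνk.ne', mul_comm]
        exact hpS k j
      have hlogq : Real.log (q k j) = Real.log (ν k) + Real.log (Q k (g j))
          + Real.log (μ j) - Real.log (ν (g j)) := by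
        rw [hq]
        simp only
        rw [Real.log_div (mul_pos (mul_pos hνk hQpos) (hμpos j)).ne' (hνg j).ne',
          Real.log_mul (mul_pos hνk hQpos).ne' (hμpos j).ne',
          Real.log_mul hνk.ne' hQpos.ne']
      have hlogS : Real.log (S k j) = Real.log (p k j) - Real.log (ν k) := by
        rw [hSval, Real.log_div h.ne' hνk.ne']
      have key : Real.log (q k j) - Real.log (p k j) ≤ q k j / p k j - 1 := by
        have h3 := Real.log_le_sub_one_of_pos (div_pos hqpos h)
        rwa [Real.log_div hqpos.ne' h.ne'] at h3
      have h4 : p k j * (q k j / p k j) = q k j := by field_simp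
      have h5 : p k j * (Real.log (q k j) - Real.log (p k j)) ≤ q k j - p k j := by
        have h6 := mul_le_mul_of_nonneg_left key h.le
        have h7 : p k j * (q k j / p k j - 1) = q k j - p k j := by field_simp
        linarith
      calc p k j * (Real.log (Q k (g j)) + Real.log (μ j) - Real.log (ν (g j))
            - Real.log (S k j))
          = p k j * (Real.log (q k j) - Real.log (p k j)) := by rw [hlogq, hlogS]; ring
        _ ≤ q k j - p k j := h5
  have hql : ∀ k l, ∑ j ∈ univ.filter (fun j => g j = l), q k j = ν k * Q k l := by
    intro k l
    rcases eq_or_ne (ν l) 0 with h | h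
    · have he := hν0 l h
      have hQ0 : Q k l = 0 := by rw [hQ]; simp [he]
      simp [he, hQ0]
    · have hc : ∀ j ∈ univ.filter (fun j => g j = l), q k j = ν k * Q k l / ν l * μ j := by
        intro j hj
        simp only [Finset.mem_filter] at hj
        rw [hq]
        simp only
        rw [hj.2]
        ring
      rw [Finset.sum_congr rfl hc, ← Finset.mul_sum, ← hν, div_mul_cancel₀ _ h]
  have hsum_q : ∀ k, ∑ j, q k j = ∑ j, p k j := by
    intro k
    rw [← Finset.sum_fiberwise univ g (fun j => q k j),
      ← Finset.sum_fiberwise univ g (fun j => p k j)]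
    exact Finset.sum_congr rfl fun l _ => by rw [hql, ← hpQ]
  have main : ∑ k, ∑ j, p k j * (Real.log (Q k (g j)) + Real.log (μ j)
      - Real.log (ν (g j)) - Real.log (S k j)) ≤ 0 := by
    calc ∑ k, ∑ j, p k j * (Real.log (Q k (g j)) + Real.log (μ j)
          - Real.log (ν (g j)) - Real.log (S k j))
        ≤ ∑ k, ∑ j, (q k j - p k j) :=
          Finset.sum_le_sum fun k _ => Finset.sum_le_sum fun j _ => pointwise k j
      _ = 0 := by
          simp only [Finset.sum_sub_distrib]
          rw [sub_eq_zero]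
          exact Finset.sum_congr rfl fun k _ => hsum_q k
  have E1 : ∑ k, ∑ j, ν k * S k j * Real.log (S k j)
      = ∑ k, ∑ j, p k j * Real.log (S k j) :=
    Finset.sum_congr rfl fun k _ => Finset.sum_congr rfl fun j _ => by rw [hpS]
  have E2 : ∑ i, μ i * Real.log (μ i) = ∑ k, ∑ j, p k j * Real.log (μ j) := by
    conv_rhs => rw [Finset.sum_comm]
    refine Finset.sum_congr rfl fun j _ => ?_
    rw [← Finset.sum_mul, hpμ j]
  have E3 : ∑ k, ν k * Real.log (ν k) = ∑ k, ∑ j, p k j * Real.log (ν (g j)) := by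
    have h1 : ∑ k, ν k * Real.log (ν k) = ∑ i : 𝒳, μ i * Real.log (ν (g i)) := by
      rw [← Finset.sum_fiberwise univ g (fun i => μ i * Real.log (ν (g i)))]
      refine Finset.sum_congr rfl fun k _ => ?_
      rw [hν, Finset.sum_mul]
      refine Finset.sum_congr rfl fun i hi => ?_
      simp only [Finset.mem_filter] at hi
      rw [hi.2, ← hν]
    rw [h1]
    conv_rhs => rw [Finset.sum_comm]
    refine Finset.sum_congr rfl fun j _ => ?_
    rw [← Finset.sum_mul, hpμ j]
  have E4 : ∑ k, ∑ l, ν k * Q k l * Real.log (Q k l)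
      = ∑ k, ∑ j, p k j * Real.log (Q k (g j)) := by
    refine Finset.sum_congr rfl fun k _ => ?_
    rw [← Finset.sum_fiberwise univ g (fun j => p k j * Real.log (Q k (g j)))]
    refine Finset.sum_congr rfl fun l _ => ?_
    rw [hpQ, Finset.sum_mul]
    refine Finset.sum_congr rfl fun j hj => ?_
    simp only [Finset.mem_filter] at hj
    rw [hj.2]
  have expand : ∑ k, ∑ j, p k j * (Real.log (Q k (g j)) + Real.log (μ j)
      - Real.log (ν (g j)) - Real.log (S k j))
      = (∑ k, ∑ j, p k j * Real.log (Q k (g j)))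
        + (∑ k, ∑ j, p k j * Real.log (μ j))
        - (∑ k, ∑ j, p k j * Real.log (ν (g j)))
        - (∑ k, ∑ j, p k j * Real.log (S k j)) := by
    simp only [mul_add, mul_sub, Finset.sum_add_distrib, Finset.sum_sub_distrib]
  linarith [main, E1, E2, E3, E4, expand]
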